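/- In any BDRG A, the following are equivalent: (1) p → (q → r) ≤ (p → q) → (p → r) holds for all p, q, r ∈ A (Frege axiom (Fr)); (2) p • (u • s) ≤ (p • u) • (p • s) holds for all p, u, s ∈ A (rule (fr)). -/
import Mathlib


/-- A bounded distributive lattice-ordered residuated groupoid (BDRG):
a bounded distributive lattice with operations `prod` (•), `imp` (→), `limp` (←)
satisfying the residuation law: a • b ≤ c ↔ b ≤ a → c ↔ a ≤ c ← b. -/
structure BDRG (A : Type*) [DistribLattice A] [BoundedOrder A] where
  prod : A → A → A
  imp : A → A → A
  limp : A → A → A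
  res_imp : ∀ a b c : A, prod a b ≤ c ↔ b ≤ imp a c
  res_limp : ∀ a b c : A, prod a b ≤ c ↔ a ≤ limp c b

theorem corr_Fr_fr {A : Type*} [DistribLattice A] [BoundedOrder A] (G : BDRG A) :
    (∀ p q r : A, G.imp p (G.imp q r) ≤ G.imp (G.imp p q) (G.imp p r)) ↔
    (∀ p u s : A, G.prod p (G.prod u s) ≤ G.prod (G.prod p u) (G.prod p s)) := by
  have monoL : ∀ {a a'} (b : A), a ≤ a' → G.prod a b ≤ G.prod a' b := by
    intro a a' b h
    exact (G.res_limp a b _).mpr (le_trans h ((G.res_limp a' b _).mp le_rfl))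
  have monoR : ∀ (a : A) {b b'}, b ≤ b' → G.prod a b ≤ G.prod a b' := by
    intro a b b' h
    exact (G.res_imp a b _).mpr (le_trans h ((G.res_imp a b' _).mp le_rfl))
  have ev : ∀ p q : A, G.prod p (G.imp p q) ≤ q := fun p q => (G.res_imp p _ q).mpr le_rfl
  have unit : ∀ p a : A, a ≤ G.imp p (G.prod p a) := fun p a => (G.res_imp p a _).mp le_rfl
  constructor
  · intro Fr p u s
    rw [G.res_imp, G.res_imp]  -- reduce to s ≤ imp u (imp p RHS)
    set R := G.prod (G.prod p u) (G.prod p s) with hR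
    have h1 : G.prod p s ≤ G.imp (G.prod p u) R := (G.res_imp _ _ _).mp le_rfl
    have h2 : s ≤ G.imp p (G.imp (G.prod p u) R) := (G.res_imp p s _).mp h1
    have h3 : s ≤ G.imp (G.imp p (G.prod p u)) (G.imp p R) :=
      h2.trans (Fr p (G.prod p u) R)
    have h4 : G.prod (G.imp p (G.prod p u)) s ≤ G.imp p R := (G.res_imp _ s _).mpr h3
    have h5 : G.prod u s ≤ G.imp p R := (monoL s (unit p u)).trans h4
    exact (G.res_imp u s _).mp h5
  · intro fr p q r
    rw [← G.res_imp, ← G.res_imp]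
    calc G.prod p (G.prod (G.imp p q) (G.imp p (G.imp q r)))
        ≤ G.prod (G.prod p (G.imp p q)) (G.prod p (G.imp p (G.imp q r))) := fr _ _ _
      _ ≤ G.prod q (G.prod p (G.imp p (G.imp q r))) := monoL _ (ev p q)
      _ ≤ G.prod q (G.imp q r) := monoR _ (ev p _)
      _ ≤ r := ev q r
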